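/- arXiv:math/9905168 — 6 statements merged into one kernel-verified Lean document; each statement's English description precedes it below -/
import Mathlib

section
/- Let (A,R) be a triangular Hopf algebra over a field k of characteristic ≠ 2 with Drinfeld element u satisfying u² = 1 and u central and grouplike. Set R_u = (1/2)(1⊗1 + 1⊗u + u⊗1 − u⊗u). Then R·R_u is again a universal R-matrix for A making (A, R·R_u) triangular. -/
open TensorProduct

/-- A twist for a Hopf algebra `A` over `k`. -/
def IsHopfTwist (k : Type*) [Field k] (A : Type*) [Ring A] [HopfAlgebra k A]
    (J : A ⊗[k] A) : Prop :=
  IsUnit J ∧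
  (TensorProduct.map (Coalgebra.comul (R := k)) LinearMap.id J) * (J ⊗ₜ[k] (1 : A)) =
    (Algebra.TensorProduct.assoc k k k A A A).symm
      ((TensorProduct.map LinearMap.id (Coalgebra.comul (R := k)) J) * ((1 : A) ⊗ₜ[k] J)) ∧
  TensorProduct.lid k A (TensorProduct.map (Coalgebra.counit (R := k)) LinearMap.id J) = 1 ∧
  TensorProduct.rid k A (TensorProduct.map LinearMap.id (Coalgebra.counit (R := k)) J) = 1

/-- The twisted coproduct `Δ^J(a) = J⁻¹ · Δ(a) · J`, as a linear map. -/
noncomputable def twistedComul (k : Type*) [Field k] (A : Type*) [Ring A] [HopfAlgebra k A]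
    (J : A ⊗[k] A) : A →ₗ[k] A ⊗[k] A :=
  (LinearMap.mulRight k J) ∘ₗ (LinearMap.mulLeft k (Ring.inverse J)) ∘ₗ
    (Coalgebra.comul (R := k))

/-- `R₁₂ = R ⊗ 1` in `(A ⊗ A) ⊗ A`. -/
noncomputable def Rmat12 (k : Type*) [Field k] (A : Type*) [Ring A] [HopfAlgebra k A]
    (R : A ⊗[k] A) : (A ⊗[k] A) ⊗[k] A := R ⊗ₜ[k] (1 : A)

/-- `R₂₃ = 1 ⊗ R` in `(A ⊗ A) ⊗ A`. -/
noncomputable def Rmat23 (k : Type*) [Field k] (A : Type*) [Ring A] [HopfAlgebra k A]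
    (R : A ⊗[k] A) : (A ⊗[k] A) ⊗[k] A :=
  (Algebra.TensorProduct.assoc k k k A A A).symm ((1 : A) ⊗ₜ[k] R)

/-- `R₁₃` in `(A ⊗ A) ⊗ A`: `R ⊗ 1` with the second and third tensor factors swapped. -/
noncomputable def Rmat13 (k : Type*) [Field k] (A : Type*) [Ring A] [HopfAlgebra k A]
    (R : A ⊗[k] A) : (A ⊗[k] A) ⊗[k] A :=
  (Algebra.TensorProduct.assoc k k k A A A).symm
    (TensorProduct.map LinearMap.id (TensorProduct.comm k A A).toLinearMap
      ((Algebra.TensorProduct.assoc k k k A A A) (R ⊗ₜ[k] (1 : A))))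

/-- A universal R-matrix for a Hopf algebra `A`: an invertible element of `A ⊗ A`
intertwining the coproduct and the opposite coproduct, and satisfying the hexagon
identities. -/
def IsUniversalRMatrix (k : Type*) [Field k] (A : Type*) [Ring A] [HopfAlgebra k A]
    (R : A ⊗[k] A) : Prop :=
  IsUnit R ∧
  (∀ a : A, R * Coalgebra.comul (R := k) a =
    (Algebra.TensorProduct.comm k A A) (Coalgebra.comul (R := k) a) * R) ∧
  TensorProduct.map (Coalgebra.comul (R := k)) LinearMap.id R =
    Rmat13 k A R * Rmat23 k A R ∧
  (Algebra.TensorProduct.assoc k k k A A A).symm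
      (TensorProduct.map LinearMap.id (Coalgebra.comul (R := k)) R) =
    Rmat13 k A R * Rmat12 k A R

section
variable {k : Type*} [Field k] {A : Type*} [Ring A] [HopfAlgebra k A]

lemma mapDl_eq :
    (TensorProduct.map (Coalgebra.comul (R := k)) (LinearMap.id : A →ₗ[k] A)) =
      (Algebra.TensorProduct.map (Bialgebra.comulAlgHom k A) (AlgHom.id k A)).toLinearMap := by
  apply TensorProduct.ext'; intro a b; simp

lemma mapDr_eq :
    (TensorProduct.map (LinearMap.id : A →ₗ[k] A) (Coalgebra.comul (R := k))) =
      (Algebra.TensorProduct.map (AlgHom.id k A) (Bialgebra.comulAlgHom k A)).toLinearMap := by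
  apply TensorProduct.ext'; intro a b; simp

lemma map_comm_eq :
    (TensorProduct.map (LinearMap.id : A →ₗ[k] A) (TensorProduct.comm k A A).toLinearMap) =
      (Algebra.TensorProduct.map (AlgHom.id k A)
        (Algebra.TensorProduct.comm k A A).toAlgHom).toLinearMap := by
  ext; simp

lemma mapDl_mul (x y : A ⊗[k] A) :
    TensorProduct.map (Coalgebra.comul (R := k)) LinearMap.id (x * y) =
      TensorProduct.map (Coalgebra.comul (R := k)) LinearMap.id x *
        TensorProduct.map (Coalgebra.comul (R := k)) LinearMap.id y := by
  rw [mapDl_eq]; simp only [AlgHom.toLinearMap_apply]; exact map_mul _ x y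

lemma mapDr_mul (x y : A ⊗[k] A) :
    TensorProduct.map LinearMap.id (Coalgebra.comul (R := k)) (x * y) =
      TensorProduct.map LinearMap.id (Coalgebra.comul (R := k)) x *
        TensorProduct.map LinearMap.id (Coalgebra.comul (R := k)) y := by
  rw [mapDr_eq]; simp only [AlgHom.toLinearMap_apply]; exact map_mul _ x y

lemma Rmat12_mul (x y : A ⊗[k] A) :
    Rmat12 k A (x * y) = Rmat12 k A x * Rmat12 k A y := by
  unfold Rmat12
  rw [Algebra.TensorProduct.tmul_mul_tmul, mul_one]

lemma Rmat23_mul (x y : A ⊗[k] A) :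
    Rmat23 k A (x * y) = Rmat23 k A x * Rmat23 k A y := by
  unfold Rmat23
  rw [show (1:A) ⊗ₜ[k] (x*y) = ((1:A) ⊗ₜ[k] x) * ((1:A) ⊗ₜ[k] y) by
    rw [Algebra.TensorProduct.tmul_mul_tmul, one_mul], map_mul]

lemma Rmat13_mul (x y : A ⊗[k] A) :
    Rmat13 k A (x * y) = Rmat13 k A x * Rmat13 k A y := by
  unfold Rmat13
  rw [show (x*y) ⊗ₜ[k] (1:A) = (x ⊗ₜ[k] (1:A)) * (y ⊗ₜ[k] (1:A)) by
    rw [Algebra.TensorProduct.tmul_mul_tmul, mul_one], map_mul, map_comm_eq]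
  simp only [AlgHom.toLinearMap_apply, map_mul]

lemma Rmat13_tmul (a b : A) :
    Rmat13 k A (a ⊗ₜ[k] b) = (a ⊗ₜ[k] (1:A)) ⊗ₜ[k] b := by
  simp [Rmat13, Algebra.TensorProduct.assoc_tmul, Algebra.TensorProduct.assoc_symm_tmul]

lemma Rmat23_tmul (a b : A) :
    Rmat23 k A (a ⊗ₜ[k] b) = ((1:A) ⊗ₜ[k] a) ⊗ₜ[k] b := by
  simp [Rmat23, Algebra.TensorProduct.assoc_symm_tmul]

lemma central_tmul2 {a b : A} (ha : ∀ t, a * t = t * a) (hb : ∀ t, b * t = t * b)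
    (z : A ⊗[k] A) : Commute (a ⊗ₜ[k] b) z := by
  induction z using TensorProduct.induction_on with
  | zero => exact Commute.zero_right _
  | add x y hx hy => exact hx.add_right hy
  | tmul p q =>
    show _ = _
    rw [Algebra.TensorProduct.tmul_mul_tmul, Algebra.TensorProduct.tmul_mul_tmul, ha, hb]

lemma central_tmul3 {a b c : A} (ha : ∀ t, a * t = t * a) (hb : ∀ t, b * t = t * b)
    (hc : ∀ t, c * t = t * c)
    (z : (A ⊗[k] A) ⊗[k] A) : Commute ((a ⊗ₜ[k] b) ⊗ₜ[k] c) z := by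
  induction z using TensorProduct.induction_on with
  | zero => exact Commute.zero_right _
  | add x y hx hy => exact hx.add_right hy
  | tmul x d =>
    induction x using TensorProduct.induction_on with
    | zero => rw [zero_tmul]; exact Commute.zero_right _
    | add p q hp hq => rw [add_tmul]; exact hp.add_right hq
    | tmul p q =>
      show _ = _
      rw [Algebra.TensorProduct.tmul_mul_tmul, Algebra.TensorProduct.tmul_mul_tmul,
        Algebra.TensorProduct.tmul_mul_tmul, Algebra.TensorProduct.tmul_mul_tmul, ha, hb, hc]

lemma one_central : ∀ t : A, 1 * t = t * 1 := fun t => by rw [one_mul, mul_one]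
end


set_option maxHeartbeats 1000000 in
/-- If `(A,R)` is triangular over `k` (char ≠ 2) with Drinfeld element `u` central, grouplike
and satisfying `u² = 1`, and `R_u = ½(1⊗1 + 1⊗u + u⊗1 − u⊗u)`, then `R·R_u` is again a
universal R-matrix for `A` making `(A, R·R_u)` triangular. -/
theorem mul_Ru_triangular (k : Type*) [Field k] (A : Type*) [Ring A] [HopfAlgebra k A]
    (hchar : (2 : k) ≠ 0)
    (R : A ⊗[k] A) (hR : IsUniversalRMatrix k A R)
    (htri : (Algebra.TensorProduct.comm k A A) R * R = 1)
    (u : A) (hgrp : Coalgebra.comul (R := k) u = u ⊗ₜ[k] u)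
    (hcounit : Coalgebra.counit (R := k) u = (1 : k))
    (hcentral : ∀ a : A, u * a = a * u) (hu2 : u * u = 1) :
    IsUniversalRMatrix k A
        (R * ((2 : k)⁻¹ • ((1 : A ⊗[k] A) + (1 : A) ⊗ₜ[k] u + u ⊗ₜ[k] (1 : A) - u ⊗ₜ[k] u))) ∧
      (Algebra.TensorProduct.comm k A A)
          (R * ((2 : k)⁻¹ • ((1 : A ⊗[k] A) + (1 : A) ⊗ₜ[k] u + u ⊗ₜ[k] (1 : A) - u ⊗ₜ[k] u))) *
        (R * ((2 : k)⁻¹ • ((1 : A ⊗[k] A) + (1 : A) ⊗ₜ[k] u + u ⊗ₜ[k] (1 : A) - u ⊗ₜ[k] u))) =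
      1 := by
  set Ru : A ⊗[k] A :=
    (2 : k)⁻¹ • ((1 : A ⊗[k] A) + (1 : A) ⊗ₜ[k] u + u ⊗ₜ[k] (1 : A) - u ⊗ₜ[k] u) with hRudef
  -- centrality of Ru
  have cRu : ∀ z : A ⊗[k] A, Commute Ru z := by
    intro z
    rw [hRudef]
    exact ((((Commute.one_left z).add_left
      (central_tmul2 one_central hcentral z)).add_left
      (central_tmul2 hcentral one_central z)).sub_left
      (central_tmul2 hcentral hcentral z)).smul_left _
  -- Ru * Ru = 1
  have hRu2 : Ru * Ru = 1 := by
    rw [hRudef, smul_mul_assoc, mul_smul_comm, smul_smul]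
    simp only [mul_add, add_mul, mul_sub, sub_mul, mul_one, one_mul,
      Algebra.TensorProduct.tmul_mul_tmul, hu2, Algebra.TensorProduct.one_def]
    match_scalars <;> field_simp <;> ring
  -- comm Ru = Ru
  have hcommRu : (Algebra.TensorProduct.comm k A A) Ru = Ru := by
    rw [hRudef]
    simp only [map_smul, map_add, map_sub, map_one, Algebra.TensorProduct.comm_tmul]
    module
  -- explicit forms
  have e13 : Rmat13 k A Ru = (2:k)⁻¹ • (((1:A) ⊗ₜ[k] (1:A)) ⊗ₜ[k] (1:A)
      + ((1:A) ⊗ₜ[k] (1:A)) ⊗ₜ[k] u + (u ⊗ₜ[k] (1:A)) ⊗ₜ[k] (1:A)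
      - (u ⊗ₜ[k] (1:A)) ⊗ₜ[k] u) := by
    rw [hRudef]
    simp only [Algebra.TensorProduct.one_def, add_tmul, sub_tmul, ← TensorProduct.smul_tmul',
      map_smul, map_add, map_sub, Rmat13, Algebra.TensorProduct.assoc_tmul,
      TensorProduct.map_tmul, LinearMap.id_coe, id_eq, LinearEquiv.coe_coe,
      TensorProduct.comm_tmul, Algebra.TensorProduct.assoc_symm_tmul]
  have e23 : Rmat23 k A Ru = (2:k)⁻¹ • (((1:A) ⊗ₜ[k] (1:A)) ⊗ₜ[k] (1:A)
      + ((1:A) ⊗ₜ[k] (1:A)) ⊗ₜ[k] u + ((1:A) ⊗ₜ[k] u) ⊗ₜ[k] (1:A)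
      - ((1:A) ⊗ₜ[k] u) ⊗ₜ[k] u) := by
    rw [hRudef]
    simp only [Algebra.TensorProduct.one_def, add_tmul, sub_tmul, ← TensorProduct.smul_tmul',
      map_smul, map_add, map_sub, Rmat23, TensorProduct.tmul_add, TensorProduct.tmul_sub,
      TensorProduct.tmul_smul, Algebra.TensorProduct.assoc_symm_tmul]
  have e12 : Rmat12 k A Ru = (2:k)⁻¹ • (((1:A) ⊗ₜ[k] (1:A)) ⊗ₜ[k] (1:A)
      + ((1:A) ⊗ₜ[k] u) ⊗ₜ[k] (1:A) + (u ⊗ₜ[k] (1:A)) ⊗ₜ[k] (1:A)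
      - (u ⊗ₜ[k] u) ⊗ₜ[k] (1:A)) := by
    rw [hRudef]
    simp only [Rmat12, Algebra.TensorProduct.one_def, add_tmul, sub_tmul,
      ← TensorProduct.smul_tmul']
  have c13 : ∀ z : (A ⊗[k] A) ⊗[k] A, Commute (Rmat13 k A Ru) z := by
    intro z
    rw [e13]
    exact ((((central_tmul3 one_central one_central one_central z).add_left
      (central_tmul3 one_central one_central hcentral z)).add_left
      (central_tmul3 hcentral one_central one_central z)).sub_left
      (central_tmul3 hcentral one_central hcentral z)).smul_left _
  -- hexagon identities for Ru
  have eDl : TensorProduct.map (Coalgebra.comul (R := k)) LinearMap.id Ru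
      = (2:k)⁻¹ • (((1:A) ⊗ₜ[k] (1:A)) ⊗ₜ[k] (1:A)
      + ((1:A) ⊗ₜ[k] (1:A)) ⊗ₜ[k] u + (u ⊗ₜ[k] u) ⊗ₜ[k] (1:A)
      - (u ⊗ₜ[k] u) ⊗ₜ[k] u) := by
    rw [hRudef]
    simp only [Algebra.TensorProduct.one_def, map_smul, map_add, map_sub,
      TensorProduct.map_tmul, LinearMap.id_coe, id_eq, hgrp, Bialgebra.comul_one]
  have eDr : (Algebra.TensorProduct.assoc k k k A A A).symm
      (TensorProduct.map LinearMap.id (Coalgebra.comul (R := k)) Ru)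
      = (2:k)⁻¹ • (((1:A) ⊗ₜ[k] (1:A)) ⊗ₜ[k] (1:A)
      + ((1:A) ⊗ₜ[k] u) ⊗ₜ[k] u + (u ⊗ₜ[k] (1:A)) ⊗ₜ[k] (1:A)
      - (u ⊗ₜ[k] u) ⊗ₜ[k] u) := by
    rw [hRudef]
    simp only [Algebra.TensorProduct.one_def, map_smul, map_add, map_sub,
      TensorProduct.map_tmul, LinearMap.id_coe, id_eq, hgrp, Bialgebra.comul_one,
      Algebra.TensorProduct.assoc_symm_tmul]
  have hex1Ru : TensorProduct.map (Coalgebra.comul (R := k)) LinearMap.id Ru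
      = Rmat13 k A Ru * Rmat23 k A Ru := by
    rw [eDl, e13, e23, smul_mul_assoc, mul_smul_comm, smul_smul]
    simp only [mul_add, add_mul, mul_sub, sub_mul, mul_one, one_mul,
      Algebra.TensorProduct.tmul_mul_tmul, hu2]
    match_scalars <;> field_simp <;> ring
  have hex2Ru : (Algebra.TensorProduct.assoc k k k A A A).symm
      (TensorProduct.map LinearMap.id (Coalgebra.comul (R := k)) Ru)
      = Rmat13 k A Ru * Rmat12 k A Ru := by
    rw [eDr, e13, e12, smul_mul_assoc, mul_smul_comm, smul_smul]
    simp only [mul_add, add_mul, mul_sub, sub_mul, mul_one, one_mul,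
      Algebra.TensorProduct.tmul_mul_tmul, hu2]
    match_scalars <;> field_simp <;> ring
  refine ⟨⟨?_, ?_, ?_, ?_⟩, ?_⟩
  · exact hR.1.mul ⟨⟨Ru, Ru, hRu2, hRu2⟩, rfl⟩
  · intro a
    rw [mul_assoc, (cRu _).eq, ← mul_assoc, hR.2.1 a, mul_assoc]
  · rw [mapDl_mul, hR.2.2.1, hex1Ru, Rmat13_mul, Rmat23_mul]
    exact (c13 (Rmat23 k A R)).symm.mul_mul_mul_comm _ _
  · rw [mapDr_mul, map_mul, hR.2.2.2, hex2Ru, Rmat13_mul, Rmat12_mul]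
    exact (c13 (Rmat12 k A R)).symm.mul_mul_mul_comm _ _
  · rw [map_mul, hcommRu, mul_assoc, ← mul_assoc Ru R Ru, (cRu R).eq,
      mul_assoc R Ru Ru, hRu2, mul_one]
    exact htri
end

section
/- Let K be a finite group with an irreducible complex representation V such that (dim V)² = [K : Z], where Z is a central subgroup of K contained in the kernel of the induced projective representation (i.e. V restricted to Z acts by scalars). Then Z equals the full center Z(K). -/
open Module LinearMap

section Aux

variable {V : Type*} [AddCommGroup V] [Module ℂ V] [FiniteDimensional ℂ V]

/-- For `f` with `f ^ m = 1`, the trace of `f ^ (m-1)` (i.e. of `f⁻¹`) is the complex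
conjugate of the trace of `f`. -/
lemma aux_trace_pow_eq_conj_trace (f : Module.End ℂ V) (m : ℕ) (hm : m ≠ 0) (hf : f ^ m = 1) :
    LinearMap.trace ℂ V (f ^ (m - 1)) = (starRingEnd ℂ) (LinearMap.trace ℂ V f) := by
  classical
  have hsq : Squarefree (Polynomial.X ^ m - 1 : Polynomial ℂ) :=
    (Polynomial.X_pow_sub_one_separable_iff.mpr
      (by exact_mod_cast (Nat.cast_ne_zero (R := ℂ)).mpr hm)).squarefree
  have haev : Polynomial.aeval f (Polynomial.X ^ m - 1 : Polynomial ℂ) = 0 := by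
    simp [hf]
  have hss : f.IsSemisimple := Module.End.isSemisimple_of_squarefree_aeval_eq_zero hsq haev
  have hfss := hss.isFinitelySemisimple
  have htop : ⨆ μ, f.eigenspace μ = ⊤ := by
    have h1 := Module.End.iSup_maxGenEigenspace_eq_top f
    simpa [hfss.maxGenEigenspace_eq_eigenspace] using h1
  have hInt : DirectSum.IsInternal (fun μ : ℂ => f.eigenspace μ) :=
    (DirectSum.isInternal_submodule_iff_iSupIndep_and_iSup_eq_top _).mpr
      ⟨f.eigenspaces_iSupIndep, htop⟩
  have heig : ∀ (μ : ℂ) (k : ℕ), ∀ v ∈ f.eigenspace μ, (f ^ k) v = μ ^ k • v := by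
    intro μ k v hv
    have hfv : f v = μ • v := Module.End.mem_eigenspace_iff.mp hv
    induction k with
    | zero => simp
    | succ n ih =>
        rw [pow_succ, Module.End.mul_apply, hfv, map_smul, ih, smul_smul, ← pow_succ']
  have hroot : ∀ μ : ℂ, f.eigenspace μ ≠ ⊥ → μ ^ m = 1 := by
    intro μ hμ
    obtain ⟨v, hv, hv0⟩ := (Submodule.ne_bot_iff _).mp hμ
    have h1 : (f ^ m) v = μ ^ m • v := heig μ m v hv
    rw [hf] at h1
    have h2 : (μ ^ m - 1) • v = 0 := by
      rw [sub_smul, one_smul, ← h1]; simp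
    rcases smul_eq_zero.mp h2 with h | h
    · exact sub_eq_zero.mp h
    · exact absurd h hv0
  have hpne : (Polynomial.X ^ m - 1 : Polynomial ℂ) ≠ 0 := hsq.ne_zero
  have hfin : {μ : ℂ | f.eigenspace μ ≠ ⊥}.Finite := by
    refine Set.Finite.subset (Polynomial.finite_setOf_isRoot hpne) ?_
    intro μ hμ
    simp only [Set.mem_setOf_eq] at hμ ⊢
    simp [Polynomial.IsRoot.def, hroot μ hμ]
  have hmt : ∀ (k : ℕ) (μ : ℂ), Set.MapsTo (f ^ k) (f.eigenspace μ) (f.eigenspace μ) := by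
    intro k μ v hv
    have h1 := heig μ k v hv
    simp only [Set.mem_setOf_eq, SetLike.mem_coe] at hv ⊢
    rw [h1]
    exact Submodule.smul_mem _ _ hv
  have htr : ∀ k : ℕ, LinearMap.trace ℂ V (f ^ k)
      = ∑ μ ∈ hfin.toFinset, μ ^ k * (Module.finrank ℂ (f.eigenspace μ)) := by
    intro k
    rw [LinearMap.trace_eq_sum_trace_restrict' hInt hfin (hmt k)]
    refine Finset.sum_congr rfl fun μ hμ => ?_
    have hres : (f ^ k).restrict (hmt k μ) = (μ ^ k : ℂ) • LinearMap.id := by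
      ext ⟨v, hv⟩
      simp [LinearMap.restrict_apply, heig μ k v hv]
      exact heig μ k v hv
    rw [hres, map_smul, LinearMap.trace_id]
    simp [smul_eq_mul]
  have hm1 : m - 1 + 1 = m := Nat.succ_pred_eq_of_pos (Nat.pos_of_ne_zero hm)
  rw [htr (m - 1)]
  have h2 : LinearMap.trace ℂ V f = ∑ μ ∈ hfin.toFinset,
      μ * (Module.finrank ℂ (f.eigenspace μ)) := by
    have := htr 1
    simpa using this
  rw [h2, map_sum]
  refine Finset.sum_congr rfl fun μ hμ => ?_
  have hμroot : μ ^ m = 1 := hroot μ (by simpa using hμ)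
  have hnorm : ‖μ‖ = 1 := Complex.norm_eq_one_of_pow_eq_one hμroot hm
  have hinv : μ ^ (m - 1) = μ⁻¹ := by
    refine eq_inv_of_mul_eq_one_left ?_
    rw [← pow_succ, hm1, hμroot]
  rw [hinv, Complex.inv_eq_conj hnorm, map_mul]
  congr 1
  simp

variable {K : Type*} [Group K]

/-- Schur's lemma, by hand: an endomorphism commuting with an irreducible representation
is a scalar. -/
lemma aux_schur (ρ : Representation ℂ K V) [Nontrivial V]
    (hirr : ∀ W : Submodule ℂ V, (∀ g : K, ∀ v ∈ W, ρ g v ∈ W) → W = ⊥ ∨ W = ⊤)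
    (T : Module.End ℂ V) (hT : ∀ g : K, T * ρ g = ρ g * T) :
    ∃ c : ℂ, T = c • (LinearMap.id : V →ₗ[ℂ] V) := by
  obtain ⟨c, hc⟩ := Module.End.exists_eigenvalue T
  refine ⟨c, ?_⟩
  have hW : ∀ g : K, ∀ v ∈ T.eigenspace c, ρ g v ∈ T.eigenspace c := by
    intro g v hv
    rw [Module.End.mem_eigenspace_iff] at hv ⊢
    have h1 : T (ρ g v) = ρ g (T v) := by
      have := congrArg (fun S : Module.End ℂ V => S v) (hT g)
      simpa [Module.End.mul_apply] using this
    rw [h1, hv, map_smul]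
  rcases hirr _ hW with h | h
  · exact absurd h hc
  · ext v
    have hv : v ∈ T.eigenspace c := h ▸ Submodule.mem_top
    simpa [Module.End.mem_eigenspace_iff] using hv

variable [Fintype K]

/-- The averaging trick: `∑ g, ρ g * A * ρ g⁻¹` is a scalar `c` with
`c * dim V = |K| * trace A`. -/
lemma aux_avg (ρ : Representation ℂ K V) [Nontrivial V]
    (hirr : ∀ W : Submodule ℂ V, (∀ g : K, ∀ v ∈ W, ρ g v ∈ W) → W = ⊥ ∨ W = ⊤)
    (A : Module.End ℂ V) :
    ∃ c : ℂ, (∑ g : K, ρ g * A * ρ g⁻¹) = c • (LinearMap.id : V →ₗ[ℂ] V) ∧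
      c * (Module.finrank ℂ V) = (Fintype.card K) * LinearMap.trace ℂ V A := by
  classical
  set T : Module.End ℂ V := ∑ g : K, ρ g * A * ρ g⁻¹ with hTdef
  have hT : ∀ h : K, T * ρ h = ρ h * T := by
    intro h
    rw [hTdef, Finset.sum_mul, Finset.mul_sum]
    refine Fintype.sum_equiv (Equiv.mulLeft h⁻¹) _ _ fun g => ?_
    simp only [Equiv.coe_mulLeft]
    calc ρ g * A * ρ g⁻¹ * ρ h
        = ρ g * A * ρ (g⁻¹ * h) := by rw [map_mul, mul_assoc]
      _ = ρ h * (ρ (h⁻¹ * g) * A * ρ (h⁻¹ * g)⁻¹) := by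
          simp only [mul_inv_rev, inv_inv, ← mul_assoc, ← map_mul, mul_inv_cancel_left, mul_inv_cancel, one_mul]
  obtain ⟨c, hc⟩ := aux_schur ρ hirr T hT
  refine ⟨c, hc, ?_⟩
  have h1 : LinearMap.trace ℂ V T = (Fintype.card K) * LinearMap.trace ℂ V A := by
    rw [hTdef, map_sum]
    have h2 : ∀ g : K, LinearMap.trace ℂ V (ρ g * A * ρ g⁻¹) = LinearMap.trace ℂ V A := by
      intro g
      rw [LinearMap.trace_mul_comm, ← mul_assoc, ← map_mul ρ]
      simp
    simp [h2, Finset.sum_const, mul_comm]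
  rw [hc] at h1
  rw [map_smul, LinearMap.trace_id] at h1
  simpa [smul_eq_mul] using h1

end Aux

/-- Let `K` be a finite group, `Z` a central subgroup, and `V` an irreducible complex
representation of `K` on which `Z` acts by scalars and with `(dim V)² = [K : Z]`. Then
`Z` equals the full center `Z(K)`. -/
theorem central_subgroup_eq_center_of_sq_dim_eq_index (K : Type*) [Group K] [Fintype K]
    (Z : Subgroup K) (hZ : Z ≤ Subgroup.center K)
    (V : Type*) [AddCommGroup V] [Module ℂ V] [FiniteDimensional ℂ V]
    (ρ : Representation ℂ K V) (hV : Nontrivial V)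
    (hirr : ∀ W : Submodule ℂ V, (∀ g : K, ∀ v ∈ W, ρ g v ∈ W) → W = ⊥ ∨ W = ⊤)
    (hscalar : ∀ z ∈ Z, ∃ c : ℂ, ρ z = c • (LinearMap.id : V →ₗ[ℂ] V))
    (hdim : (Module.finrank ℂ V) ^ 2 = Z.index) :
    Z = Subgroup.center K := by
  classical
  haveI := hV
  set d : ℕ := Module.finrank ℂ V with hd
  set n : ℕ := Fintype.card K with hn
  set χ : K → ℂ := fun g => LinearMap.trace ℂ V (ρ g) with hχ
  have hd0 : 0 < d := Module.finrank_pos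
  -- conjugate characters
  have hconj : ∀ g : K, χ g⁻¹ = (starRingEnd ℂ) (χ g) := by
    intro g
    have hm : orderOf g ≠ 0 := (orderOf_pos g).ne'
    have hfm : (ρ g) ^ orderOf g = 1 := by
      rw [← map_pow, pow_orderOf_eq_one, map_one]
    have hginv : ρ g⁻¹ = (ρ g) ^ (orderOf g - 1) := by
      rw [← map_pow]
      congr 1
      have hgg : g ^ (orderOf g - 1) * g = 1 := by
        rw [← pow_succ, Nat.sub_add_cancel (Nat.one_le_iff_ne_zero.mpr hm), pow_orderOf_eq_one]
      exact (eq_inv_of_mul_eq_one_left hgg).symm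
    rw [hχ]
    simp only
    rw [hginv]
    exact aux_trace_pow_eq_conj_trace (ρ g) (orderOf g) hm hfm
  -- orthogonality: ∑ g, χ g * χ g⁻¹ = n
  have horth : (∑ g : K, χ g * χ g⁻¹) = (n : ℂ) := by
    set b := Module.finBasis ℂ V with hb
    set M : K → Matrix (Fin d) (Fin d) ℂ := fun g => LinearMap.toMatrix b b (ρ g) with hM
    have hMavg : ∀ A : Matrix (Fin d) (Fin d) ℂ, ∃ c : ℂ,
        (∑ g : K, M g * A * M g⁻¹) = c • (1 : Matrix (Fin d) (Fin d) ℂ) ∧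
          c * (d : ℂ) = (n : ℂ) * A.trace := by
      intro A
      obtain ⟨c, hc1, hc2⟩ := aux_avg ρ hirr (Matrix.toLin b b A)
      refine ⟨c, ?_, ?_⟩
      · have h9 := congrArg (LinearMap.toMatrix b b) hc1
        rw [map_sum] at h9
        simp only [LinearMap.toMatrix_mul, LinearMap.toMatrix_toLin, map_smul,
          LinearMap.toMatrix_id] at h9
        exact h9
      · rw [hc2]
        congr 1
        rw [LinearMap.trace_eq_matrix_trace ℂ b, LinearMap.toMatrix_toLin]
    have hχM : ∀ g : K, χ g = (M g).trace := fun g => LinearMap.trace_eq_matrix_trace ℂ b (ρ g)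
    have hkey : ∀ i j : Fin d, (∑ g : K, M g i i * M g⁻¹ j j) * (d : ℂ)
        = if i = j then (n : ℂ) else 0 := by
      intro i j
      obtain ⟨c, hc1, hc2⟩ := hMavg (Matrix.single i j (1 : ℂ))
      have hentry : (∑ g : K, M g i i * M g⁻¹ j j) = if i = j then c else 0 := by
        have h9 := congrFun (congrFun hc1 i) j
        rw [Matrix.sum_apply] at h9
        have h10 : ∀ g : K, (M g * Matrix.single i j (1 : ℂ) * M g⁻¹) i j
            = M g i i * M g⁻¹ j j := by
          intro g
          simp [Matrix.mul_apply, Matrix.single, ite_and, Finset.sum_mul, mul_ite,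
            ite_mul, Finset.sum_ite_eq, Finset.sum_ite_eq']
        rw [Finset.sum_congr rfl (fun g _ => h10 g)] at h9
        rw [h9, Matrix.smul_apply, Matrix.one_apply]
        by_cases hij : i = j <;> simp [hij]
      rw [hentry]
      by_cases hij : i = j
      · subst hij
        rw [if_pos rfl, if_pos rfl, hc2, Matrix.trace_single_eq_same, mul_one]
      · rw [if_neg hij, if_neg hij, zero_mul]
    have hswap : (∑ g : K, χ g * χ g⁻¹)
        = ∑ i : Fin d, ∑ j : Fin d, ∑ g : K, M g i i * M g⁻¹ j j := by
      have h11 : ∀ g : K, χ g * χ g⁻¹ = ∑ i : Fin d, ∑ j : Fin d, M g i i * M g⁻¹ j j := by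
        intro g
        rw [hχM g, hχM g⁻¹, Matrix.trace, Matrix.trace, Finset.sum_mul_sum]
        rfl
      rw [Finset.sum_congr rfl (fun g _ => h11 g), Finset.sum_comm]
      exact Finset.sum_congr rfl fun i _ => Finset.sum_comm
    have hdC : (d : ℂ) ≠ 0 := Nat.cast_ne_zero.mpr hd0.ne'
    have hSd : (∑ g : K, χ g * χ g⁻¹) * (d : ℂ) = (n : ℂ) * (d : ℂ) := by
      rw [hswap, Finset.sum_mul]
      have h12 : ∀ i : Fin d, (∑ j : Fin d, ∑ g : K, M g i i * M g⁻¹ j j) * (d : ℂ)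
          = (n : ℂ) := by
        intro i
        rw [Finset.sum_mul, Finset.sum_congr rfl (fun j _ => hkey i j)]
        simp
      rw [Finset.sum_congr rfl (fun i _ => h12 i)]
      simp [mul_comm]
    exact mul_right_cancel₀ hdC hSd
  -- scalar action on the center gives χ z * χ z⁻¹ = d ^ 2
  have hcent : ∀ z ∈ Subgroup.center K, χ z * χ z⁻¹ = (d : ℂ) ^ 2 := by
    intro z hz
    obtain ⟨c, hc⟩ := aux_schur ρ hirr (ρ z) (fun g => by
      rw [← map_mul, ← map_mul, (Subgroup.mem_center_iff.mp hz g)])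
    have h1 : χ z = c * d := by
      rw [hχ]; simp only; rw [hc, map_smul, LinearMap.trace_id]; simp [smul_eq_mul]; exact Or.inl rfl
    have h2 : c * χ z⁻¹ = d := by
      have h3 : ρ z * ρ z⁻¹ = 1 := by rw [← map_mul]; simp
      rw [hc] at h3
      have h4 := congrArg (LinearMap.trace ℂ V) h3
      rw [Module.End.one_eq_id, LinearMap.trace_id] at h4
      have h5 : (c • (LinearMap.id : V →ₗ[ℂ] V)) * ρ z⁻¹ = c • (ρ z⁻¹) := by
        ext v; simp [Module.End.mul_apply]
      rw [h5, map_smul] at h4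
      simpa [smul_eq_mul] using h4
    calc χ z * χ z⁻¹ = (c * χ z⁻¹) * d := by rw [h1]; ring
    _ = (d : ℂ) ^ 2 := by rw [h2]; ring
  -- real inequality
  have hterm : ∀ g : K, χ g * χ g⁻¹ = (Complex.normSq (χ g) : ℂ) := by
    intro g; rw [hconj g, Complex.mul_conj]
  have hreal : (Nat.card (Subgroup.center K)) * d ^ 2 ≤ n := by
    have hsumC : (∑ g : K, (Complex.normSq (χ g) : ℂ)) = (n : ℂ) := by
      rw [← Finset.sum_congr rfl (fun g _ => hterm g)]
      exact horth
    have hsum : (∑ g : K, Complex.normSq (χ g)) = (n : ℝ) := by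
      have h7 : ((∑ g : K, Complex.normSq (χ g) : ℝ) : ℂ) = ((n : ℝ) : ℂ) := by
        exact_mod_cast hsumC
      exact_mod_cast h7
    set t : Finset K := Finset.univ.filter (· ∈ Subgroup.center K) with ht
    have hsub : ∑ g ∈ t, Complex.normSq (χ g) ≤ ∑ g : K, Complex.normSq (χ g) :=
      Finset.sum_le_sum_of_subset_of_nonneg (Finset.subset_univ t)
        (fun i _ _ => Complex.normSq_nonneg _)
    have hcval : ∀ g ∈ t, Complex.normSq (χ g) = (d : ℝ) ^ 2 := by
      intro g hg
      have hg' : g ∈ Subgroup.center K := by simpa [ht] using hg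
      have h13 := hcent g hg'
      rw [hterm g] at h13
      exact_mod_cast h13
    have hcard : t.card = Nat.card (Subgroup.center K) := by
      rw [Nat.card_eq_fintype_card, Fintype.card_subtype]
    have h8 : ((Nat.card (Subgroup.center K)) : ℝ) * (d : ℝ) ^ 2 ≤ (n : ℝ) := by
      rw [← hsum, ← hcard]
      calc (t.card : ℝ) * (d : ℝ) ^ 2 = ∑ _g ∈ t, (d : ℝ) ^ 2 := by
            rw [Finset.sum_const, nsmul_eq_mul]
        _ = ∑ g ∈ t, Complex.normSq (χ g) := (Finset.sum_congr rfl hcval).symm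
        _ ≤ ∑ g : K, Complex.normSq (χ g) := hsub
    exact_mod_cast h8
  -- conclude
  have hZcard : (Nat.card Z) * Z.index = n := by
    rw [hn, ← Nat.card_eq_fintype_card]; exact Subgroup.card_mul_index Z
  rw [← hdim] at hZcard
  have hle : Nat.card (Subgroup.center K) ≤ Nat.card Z := by
    have h6 : Nat.card (Subgroup.center K) * d ^ 2 ≤ Nat.card Z * d ^ 2 := by
      rw [hZcard]; exact hreal
    exact Nat.le_of_mul_le_mul_right h6 (pow_pos hd0 2)
  exact Subgroup.eq_of_le_of_card_ge hZ hle
end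

section
/- With notation as above, the algebra with basis {Z_{bg}} and product Z_{b₂g₂} * Z_{b₁g₁} = e^{(π(g₁),b₂)} Z_{b₁g₂} acts on V = Fun(A, ℂ) by Z_{bg}·δ_a = e^{(a,b)} δ_{π(g)}, and this action is a well-defined (associative, unital) module structure. -/
/-- The product `Z_{b₂,g₂} * Z_{b₁,g₁} = e^{(π(g₁),b₂)} Z_{b₁,g₂}`. -/
noncomputable def Zmul {A Adual G : Type*} (ee : A → Adual → ℂˣ) (π : G → A)
    (x y : (Adual × G) →₀ ℂ) : (Adual × G) →₀ ℂ :=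
  x.sum fun p₂ c₂ => y.sum fun p₁ c₁ =>
    Finsupp.single (p₁.1, p₂.2) (c₂ * c₁ * ((ee (π p₁.2) p₂.1 : ℂˣ) : ℂ))

/-- The action of the algebra with basis `{Z_{b,g}}` on `V = Fun(A,ℂ)` determined by
`Z_{b,g} · δ_a = e^{(a,b)} δ_{π(g)}`, extended bilinearly. -/
noncomputable def Zact {A Adual G : Type*} [Fintype A] [DecidableEq A]
    (ee : A → Adual → ℂˣ) (π : G → A) (x : (Adual × G) →₀ ℂ) (v : A → ℂ) : A → ℂ :=
  x.sum fun p c => fun a' : A =>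
    (c * ∑ a : A, v a * ((ee a p.1 : ℂˣ) : ℂ)) * (if a' = π p.2 then 1 else 0)

/-- The unit element `|A|⁻¹ ∑_{b,g} e^{(π(g),b)}⁻¹ Z_{b,g}` of the algebra. -/
noncomputable def ZunitElem {A Adual G : Type*} [Fintype A] [Fintype Adual] [Fintype G]
    (ee : A → Adual → ℂˣ) (π : G → A) : (Adual × G) →₀ ℂ :=
  (Fintype.card A : ℂ)⁻¹ •
    ∑ b : Adual, ∑ g : G, Finsupp.single (b, g) ((((ee (π g) b)⁻¹ : ℂˣ)) : ℂ)

section Aux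

variable {A Adual G : Type*} [Fintype A] [DecidableEq A]
  (ee : A → Adual → ℂˣ) (π : G → A)

lemma Zact_apply (x : (Adual × G) →₀ ℂ) (v : A → ℂ) (a' : A) :
    Zact ee π x v a' =
      x.sum fun p c =>
        (c * ∑ a : A, v a * ((ee a p.1 : ℂˣ) : ℂ)) * (if a' = π p.2 then 1 else 0) := by
  unfold Zact Finsupp.sum
  rw [Finset.sum_apply]

lemma Zact_add_x (x y : (Adual × G) →₀ ℂ) (v : A → ℂ) :
    Zact ee π (x + y) v = Zact ee π x v + Zact ee π y v := by
  funext a'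
  simp only [Pi.add_apply, Zact_apply]
  rw [Finsupp.sum_add_index' (by intro p; ring) (by intro p b₁ b₂; ring)]

lemma Zact_smul_x (c : ℂ) (x : (Adual × G) →₀ ℂ) (v : A → ℂ) :
    Zact ee π (c • x) v = c • Zact ee π x v := by
  funext a'
  simp only [Pi.smul_apply, Zact_apply, smul_eq_mul]
  rw [Finsupp.sum_smul_index (by intro p; ring), Finsupp.mul_sum]
  exact Finsupp.sum_congr fun p _ => by ring

lemma Zact_zero_x (v : A → ℂ) : Zact ee π (0 : (Adual × G) →₀ ℂ) v = 0 := by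
  funext a'
  simp [Zact_apply]

lemma Zact_sum_x {ι : Type*} (s : Finset ι) (f : ι → (Adual × G) →₀ ℂ) (v : A → ℂ) :
    Zact ee π (∑ i ∈ s, f i) v = ∑ i ∈ s, Zact ee π (f i) v := by
  classical
  induction s using Finset.cons_induction with
  | empty => simpa using Zact_zero_x ee π v
  | cons i s hi ih =>
      rw [Finset.sum_cons, Finset.sum_cons, Zact_add_x, ih]

lemma Zact_single (b : Adual) (g : G) (c : ℂ) (v : A → ℂ) :
    Zact ee π (Finsupp.single (b, g) c) v =
      fun a' => (c * ∑ a : A, v a * ((ee a b : ℂˣ) : ℂ)) * (if a' = π g then 1 else 0) := by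
  funext a'
  rw [Zact_apply, Finsupp.sum_single_index (by ring)]

end Aux

/-- The algebra with basis `{Z_{b,g}}` and product
`Z_{b₂,g₂} * Z_{b₁,g₁} = e^{(π(g₁),b₂)} Z_{b₁,g₂}` acts on `V = Fun(A, ℂ)` by
`Z_{b,g}·δ_a = e^{(a,b)} δ_{π(g)}`, and this is a well-defined (associative, unital)
module structure. -/
theorem Zact_module (G : Type*) [Group G] [Fintype G]
    (A : Type*) [AddCommGroup A] [Fintype A] [DecidableEq A] [DistribMulAction G A]
    (Adual : Type*) [AddCommGroup Adual] [Fintype Adual]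
    (ee : A → Adual → ℂˣ)
    (hadd_left : ∀ a a' b, ee (a + a') b = ee a b * ee a' b)
    (hadd_right : ∀ a b b', ee a (b + b') = ee a b * ee a b')
    (hcard : Fintype.card Adual = Fintype.card A)
    (hnd_left : ∀ a : A, a ≠ 0 → ∃ b, ee a b ≠ 1)
    (hnd_right : ∀ b : Adual, b ≠ 0 → ∃ a, ee a b ≠ 1)
    (π : G → A) (hbij : Function.Bijective π)
    (hcoc : ∀ g g' : G, π (g * g') = π g + g • π g') :
    (∀ (x y : (Adual × G) →₀ ℂ) (v : A → ℂ),
      Zact ee π (Zmul ee π x y) v = Zact ee π x (Zact ee π y v)) ∧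
    (∀ v : A → ℂ, Zact ee π (ZunitElem ee π) v = v) ∧
    (∀ (x : (Adual × G) →₀ ℂ) (u v : A → ℂ),
      Zact ee π x (u + v) = Zact ee π x u + Zact ee π x v) ∧
    (∀ (x : (Adual × G) →₀ ℂ) (c : ℂ) (v : A → ℂ),
      Zact ee π x (c • v) = c • Zact ee π x v) ∧
    (∀ (x y : (Adual × G) →₀ ℂ) (v : A → ℂ),
      Zact ee π (x + y) v = Zact ee π x v + Zact ee π y v) ∧
    (∀ (c : ℂ) (x : (Adual × G) →₀ ℂ) (v : A → ℂ),
      Zact ee π (c • x) v = c • Zact ee π x v) := by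
  classical
  -- basic facts about ee
  have hzero_left : ∀ b, ee 0 b = 1 := by
    intro b
    have := hadd_left 0 0 b
    rw [add_zero] at this
    exact (right_eq_mul.mp this)
  have horth : ∀ a : A, a ≠ 0 → ∑ b : Adual, ((ee a b : ℂˣ) : ℂ) = 0 := by
    intro a ha
    obtain ⟨b₀, hb₀⟩ := hnd_left a ha
    have key : ∑ b : Adual, ((ee a (b₀ + b) : ℂˣ) : ℂ) = ∑ b : Adual, ((ee a b : ℂˣ) : ℂ) :=
      Fintype.sum_equiv (Equiv.addLeft b₀) _ _ (fun b => rfl)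
    have key2 : ((ee a b₀ : ℂˣ) : ℂ) * ∑ b : Adual, ((ee a b : ℂˣ) : ℂ)
        = ∑ b : Adual, ((ee a b : ℂˣ) : ℂ) := by
      rw [Finset.mul_sum, ← key]
      refine Finset.sum_congr rfl fun b _ => ?_
      rw [hadd_right]
      push_cast
      ring
    have key3 : (((ee a b₀ : ℂˣ) : ℂ) - 1) * ∑ b : Adual, ((ee a b : ℂˣ) : ℂ) = 0 := by
      rw [sub_mul, one_mul, key2, sub_self]
    rcases mul_eq_zero.mp key3 with h | h
    · exact absurd (Units.ext (by rw [Units.val_one]; exact sub_eq_zero.mp h)) hb₀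
    · exact h
  refine ⟨?_, ?_, ?_, ?_, fun x y v => Zact_add_x ee π x y v,
    fun c x v => Zact_smul_x ee π c x v⟩
  · -- associativity
    intro x y v
    funext a'
    rw [Zact_apply, Zact_apply]
    unfold Zmul
    rw [Finsupp.sum_sum_index (fun p => by ring) (fun p b₁ b₂ => by ring)]
    refine Finsupp.sum_congr fun p₂ _ => ?_
    rw [Finsupp.sum_sum_index (fun p => by ring) (fun p b₁ b₂ => by ring)]
    have hv : ∀ a : A, Zact ee π y v a =
        y.sum fun p₁ c₁ =>
          (c₁ * ∑ a₀ : A, v a₀ * ((ee a₀ p₁.1 : ℂˣ) : ℂ)) * (if a = π p₁.2 then 1 else 0) :=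
      fun a => Zact_apply ee π y v a
    have hsum : (∑ a : A, Zact ee π y v a * ((ee a p₂.1 : ℂˣ) : ℂ)) =
        y.sum fun p₁ c₁ =>
          (c₁ * ∑ a₀ : A, v a₀ * ((ee a₀ p₁.1 : ℂˣ) : ℂ)) * ((ee (π p₁.2) p₂.1 : ℂˣ) : ℂ) := by
      simp only [hv, Finsupp.sum, Finset.sum_mul]
      rw [Finset.sum_comm]
      refine Finset.sum_congr rfl fun p₁ _ => ?_
      simp only [ite_mul, one_mul, zero_mul, mul_ite, mul_zero, mul_one]
      rw [Finset.sum_ite_eq' Finset.univ (π p₁.2)]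
      simp
    rw [hsum, Finsupp.mul_sum, Finsupp.sum_mul]
    refine Finsupp.sum_congr fun p₁ _ => ?_
    rw [Finsupp.sum_single_index (by ring)]
    ring
  · -- unit
    intro v
    funext a'
    rw [ZunitElem, Zact_smul_x]
    simp only [Zact_sum_x, Pi.smul_apply, Finset.sum_apply, smul_eq_mul]
    have step2 : ∀ a b, (((ee a' b)⁻¹ : ℂˣ) : ℂ) * ((ee a b : ℂˣ) : ℂ)
        = ((ee (a - a') b : ℂˣ) : ℂ) := by
      intro a b
      have : ee a b = ee a' b * ee (a - a') b := by
        rw [← hadd_left]; congr 1; abel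
      rw [this]
      push_cast
      field_simp
    have step1 : ∀ b : Adual,
        (∑ g : G, Zact ee π (Finsupp.single (b, g) (((ee (π g) b)⁻¹ : ℂˣ) : ℂ)) v a')
          = (((ee a' b)⁻¹ : ℂˣ) : ℂ) * ∑ a : A, v a * ((ee a b : ℂˣ) : ℂ) := by
      intro b
      simp only [Zact_single]
      rw [Fintype.sum_bijective π hbij _
        (fun t : A => ((((ee t b)⁻¹ : ℂˣ) : ℂ) * ∑ a : A, v a * ((ee a b : ℂˣ) : ℂ))
          * (if a' = t then 1 else 0)) (fun g => rfl)]
      simp only [mul_ite, mul_one, mul_zero, ite_mul, zero_mul]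
      rw [Finset.sum_congr rfl (fun t _ => by rw [if_congr (eq_comm (a := a') (b := t)) rfl rfl]),
        Finset.sum_ite_eq' Finset.univ a']
      simp
    rw [Finset.sum_congr rfl fun b _ => step1 b]
    have e2 : ∑ b : Adual, (((ee a' b)⁻¹ : ℂˣ) : ℂ) * ∑ a : A, v a * ((ee a b : ℂˣ) : ℂ)
        = ∑ a : A, v a * ∑ b : Adual, ((ee (a - a') b : ℂˣ) : ℂ) := by
      have h1 : ∀ b : Adual, (((ee a' b)⁻¹ : ℂˣ) : ℂ) * ∑ a : A, v a * ((ee a b : ℂˣ) : ℂ)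
          = ∑ a : A, v a * ((ee (a - a') b : ℂˣ) : ℂ) := by
        intro b
        rw [Finset.mul_sum]
        exact Finset.sum_congr rfl fun a _ => by rw [← step2 a b]; ring
      rw [Finset.sum_congr rfl fun b _ => h1 b, Finset.sum_comm]
      exact Finset.sum_congr rfl fun a _ => by rw [Finset.mul_sum]
    rw [e2, Finset.sum_eq_single a'
      (fun a _ ha => by rw [horth (a - a') (sub_ne_zero.mpr ha), mul_zero])
      (fun h => absurd (Finset.mem_univ a') h)]
    rw [show ∑ b : Adual, ((ee (a' - a') b : ℂˣ) : ℂ) = (Fintype.card A : ℂ) from by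
      simp [sub_self, hzero_left, hcard]]
    have hA : (Fintype.card A : ℂ) ≠ 0 := by exact_mod_cast Fintype.card_ne_zero
    field_simp
  · -- additive in v
    intro x u v
    funext a'
    simp only [Pi.add_apply, Zact_apply]
    rw [← Finsupp.sum_add]
    refine Finsupp.sum_congr fun p _ => ?_
    rw [← add_mul]
    congr 1
    rw [← mul_add, ← Finset.sum_add_distrib]
    congr 1
    exact Finset.sum_congr rfl fun a _ => by ring
  · -- scalar in v
    intro x c v
    funext a'
    simp only [Pi.smul_apply, Zact_apply, smul_eq_mul]
    rw [Finsupp.mul_sum]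
    refine Finsupp.sum_congr fun p _ => ?_
    rw [show (∑ a : A, c * v a * ((ee a p.1 : ℂˣ) : ℂ)) = c * ∑ a : A, v a * ((ee a p.1 : ℂˣ) : ℂ)
      from by rw [Finset.mul_sum]; exact Finset.sum_congr rfl fun a _ => by ring]
    ring
end

section
/- Let A be a finite abelian group and G a finite group acting on A, π: G → A a bijective 1-cocycle. Define φ on V = Fun(A, ℂ) by φ(b)δ_a = e^{−(a,b)}δ_a for b ∈ A*, φ(g)δ_a = δ_{g·a + π(g)} for g ∈ G, and φ(bg) = φ(b)φ(g). Then φ is a projective representation of the semidirect product H = G ⋉ A*: for all h₁, h₂ ∈ H, φ(h₁)φ(h₂) is a nonzero scalar multiple of φ(h₁h₂). -/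
/-- `φ(b)` for `b ∈ A*`: the operator on `V = Fun(A,ℂ)` with `φ(b)δ_a = e^{−(a,b)}δ_a`,
i.e. `(φ(b)v)(a) = e^{(a,b)}⁻¹ v(a)`. -/
noncomputable def phiB {A Adual : Type*} (ee : A → Adual → ℂˣ) (b : Adual) :
    (A → ℂ) →ₗ[ℂ] (A → ℂ) where
  toFun v := fun a => (((ee a b)⁻¹ : ℂˣ) : ℂ) * v a
  map_add' u v := by funext a; simp [mul_add]
  map_smul' c v := by funext a; simp [Pi.smul_apply, smul_eq_mul]; ring

/-- `φ(g)` for `g ∈ G`: the operator on `V = Fun(A,ℂ)` with `φ(g)δ_a = δ_{g·a+π(g)}`,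
i.e. `(φ(g)v)(a) = v(g⁻¹·(a − π(g)))`. -/
noncomputable def phiG {A G : Type*} [Group G] [AddCommGroup A] [DistribMulAction G A]
    (π : G → A) (g : G) : (A → ℂ) →ₗ[ℂ] (A → ℂ) :=
  LinearMap.funLeft ℂ ℂ (fun a => g⁻¹ • (a - π g))

/-- `φ(h) = φ(b)φ(g)` for `h = bg ∈ H = G ⋉ A*` is a projective representation of `H` on
`V = Fun(A,ℂ)`: for all `h₁ = b₂g₂`, `h₂ = b₁g₁` in `H`, `φ(h₁)φ(h₂)` is a nonzero scalar
multiple of `φ(h₁h₂)`, where `h₁h₂ = (b₂ + g₂·b₁)(g₂g₁)` in the semidirect product. -/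
theorem phi_projective_representation (G : Type*) [Group G] [Fintype G]
    (A : Type*) [AddCommGroup A] [Fintype A] [DistribMulAction G A]
    (Adual : Type*) [AddCommGroup Adual] [Fintype Adual] [DistribMulAction G Adual]
    (ee : A → Adual → ℂˣ)
    (hadd_left : ∀ a a' b, ee (a + a') b = ee a b * ee a' b)
    (hadd_right : ∀ a b b', ee a (b + b') = ee a b * ee a b')
    (hdual : ∀ (g : G) (a : A) (b : Adual), ee a (g • b) = ee (g⁻¹ • a) b)
    (π : G → A) (hbij : Function.Bijective π)
    (hcoc : ∀ g g' : G, π (g * g') = π g + g • π g') :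
    ∀ (b₂ : Adual) (g₂ : G) (b₁ : Adual) (g₁ : G), ∃ c : ℂˣ,
      (phiB ee b₂ ∘ₗ phiG π g₂) ∘ₗ (phiB ee b₁ ∘ₗ phiG π g₁) =
        (c : ℂ) • (phiB ee (b₂ + g₂ • b₁) ∘ₗ phiG π (g₂ * g₁)) := by
  intro b₂ g₂ b₁ g₁
  have hzero : ∀ b, ee 0 b = 1 := by
    intro b
    simpa using hadd_left 0 0 b
  have hsub : ∀ x y b, ee (x - y) b = ee x b * (ee y b)⁻¹ := by
    intro x y b
    have := hadd_left (x - y) y b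
    simp at this
    rw [this]; group
  refine ⟨ee (g₂⁻¹ • π g₂) b₁, ?_⟩
  apply LinearMap.ext
  intro v
  funext a
  have harg : g₁⁻¹ • (g₂⁻¹ • (a - π g₂) - π g₁) = (g₂ * g₁)⁻¹ • (a - π (g₂ * g₁)) := by
    rw [hcoc, mul_inv_rev, mul_smul, smul_sub, smul_sub]
    simp [smul_sub]; abel
  simp only [phiB, phiG, LinearMap.comp_apply, LinearMap.coe_mk, AddHom.coe_mk,
    LinearMap.funLeft_apply, LinearMap.smul_apply, Pi.smul_apply, smul_eq_mul]
  rw [harg]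
  have hscal : (ee (g₂⁻¹ • (a - π g₂)) b₁)⁻¹
      = ee (g₂⁻¹ • π g₂) b₁ * (ee a (g₂ • b₁))⁻¹ := by
    rw [hdual, smul_sub, hsub]
    group
  rw [hadd_right]
  push_cast [hscal]
  ring
end

section
/- With notation as above, the projective representation φ of H = G ⋉ A* on V = Fun(A,ℂ) is irreducible, i.e. the operators φ(h), h ∈ H, span End(V). -/
/-- Multiplication operator by `f`. -/
noncomputable def diagOp {A : Type*} (f : A → ℂ) : (A → ℂ) →ₗ[ℂ] (A → ℂ) where
  toFun v := fun a => f a * v a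
  map_add' u v := by funext a; simp [mul_add]
  map_smul' c v := by funext a; simp [Pi.smul_apply, smul_eq_mul]; ring

@[simp] lemma diagOp_apply {A : Type*} (f : A → ℂ) (v : A → ℂ) (a : A) :
    diagOp f v a = f a * v a := rfl

/-- Matrix unit `E_{a,a'}`. -/
noncomputable def eUnit {A : Type*} [DecidableEq A] (a a' : A) : (A → ℂ) →ₗ[ℂ] (A → ℂ) where
  toFun v := fun x => if x = a then v a' else 0
  map_add' u v := by funext x; by_cases h : x = a <;> simp [h]
  map_smul' c v := by funext x; by_cases h : x = a <;> simp [h]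

@[simp] lemma eUnit_apply {A : Type*} [DecidableEq A] (a a' : A) (v : A → ℂ) (x : A) :
    eUnit a a' v x = if x = a then v a' else 0 := rfl

/-- For a bijective 1-cocycle `π`, the affine map `g ↦ g•a' + π g` is bijective. -/
lemma rho_bijective {G A : Type*} [Group G] [AddCommGroup A]
    [DistribMulAction G A] (π : G → A) (hbij : Function.Bijective π)
    (hcoc : ∀ g g' : G, π (g * g') = π g + g • π g') (a' : A) :
    Function.Bijective (fun g : G => g • a' + π g) := by
  obtain ⟨h₀, hh₀⟩ := hbij.2 a'
  have heq : (fun g : G => g • a' + π g) = π ∘ (fun g : G => g * h₀) := by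
    funext g
    simp only [Function.comp_apply, hcoc g h₀, hh₀]
    abel
  rw [heq]
  exact hbij.comp (Equiv.mulRight h₀).bijective

/-- The projective representation `φ` of `H = G ⋉ A*` on `V = Fun(A,ℂ)` given by
`φ(b)δ_a = e^{−(a,b)}δ_a`, `φ(g)δ_a = δ_{g·a+π(g)}`, `φ(bg) = φ(b)φ(g)` is irreducible:
the operators `φ(h)`, `h ∈ H`, span `End(V)`. -/
theorem phi_irreducible (G : Type*) [Group G] [Fintype G]
    (A : Type*) [AddCommGroup A] [Fintype A] [DistribMulAction G A]
    (Adual : Type*) [AddCommGroup Adual] [Fintype Adual] [DistribMulAction G Adual]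
    (ee : A → Adual → ℂˣ)
    (hadd_left : ∀ a a' b, ee (a + a') b = ee a b * ee a' b)
    (hadd_right : ∀ a b b', ee a (b + b') = ee a b * ee a b')
    (hcard : Fintype.card Adual = Fintype.card A)
    (hnd_left : ∀ a : A, a ≠ 0 → ∃ b, ee a b ≠ 1)
    (hnd_right : ∀ b : Adual, b ≠ 0 → ∃ a, ee a b ≠ 1)
    (hdual : ∀ (g : G) (a : A) (b : Adual), ee a (g • b) = ee (g⁻¹ • a) b)
    (π : G → A) (hbij : Function.Bijective π)
    (hcoc : ∀ g g' : G, π (g * g') = π g + g • π g') :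
    Submodule.span ℂ
        (Set.range fun p : Adual × G => phiB ee p.1 ∘ₗ phiG π p.2) =
      (⊤ : Submodule ℂ ((A → ℂ) →ₗ[ℂ] (A → ℂ))) := by
  classical
  set S : Set ((A → ℂ) →ₗ[ℂ] (A → ℂ)) :=
    Set.range fun p : Adual × G => phiB ee p.1 ∘ₗ phiG π p.2 with hS
  -- the characters
  set χ : Adual → (A → ℂ) := fun b => fun a => (((ee a b)⁻¹ : ℂˣ) : ℂ) with hχ
  have hee0 : ∀ b : Adual, ee 0 b = 1 := by
    intro b
    have h := hadd_left 0 0 b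
    rw [add_zero] at h
    exact (mul_left_cancel (a := ee 0 b) (by rw [mul_one, ← h])).symm
  have hee0' : ∀ a : A, ee a 0 = 1 := by
    intro a
    have h := hadd_right a 0 0
    rw [add_zero] at h
    exact (mul_left_cancel (a := ee a 0) (by rw [mul_one, ← h])).symm
  -- the characters are linearly independent
  have chi_li : LinearIndependent ℂ χ := by
    let hom : Adual → (Multiplicative A →* ℂ) := fun b =>
      { toFun := fun a => (((ee (Multiplicative.toAdd a) b)⁻¹ : ℂˣ) : ℂ)
        map_one' := by simp [hee0 b]
        map_mul' := fun a a' => by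
          have := hadd_left (Multiplicative.toAdd a) (Multiplicative.toAdd a') b
          simp only [toAdd_mul] at *
          rw [this, mul_inv, Units.val_mul] }
    have hinj : Function.Injective hom := by
      intro b b' hbb
      by_contra hne
      have hsub : b - b' ≠ 0 := sub_ne_zero.mpr hne
      obtain ⟨a, ha⟩ := hnd_right (b - b') hsub
      apply ha
      have h1 : ∀ x : A, ee x b = ee x b' := by
        intro x
        have := congrArg (fun f => f (Multiplicative.ofAdd x)) (congrArg (fun f => f.toFun) hbb)
        simp only [hom] at this
        exact inv_injective (Units.ext this)
      have h2 := hadd_right a (b - b') b'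
      rw [sub_add_cancel, h1 a] at h2
      exact mul_right_cancel (by rw [← h2, one_mul])
    exact (linearIndependent_monoidHom (Multiplicative A) ℂ).comp hom hinj
  have chi_span : Submodule.span ℂ (Set.range χ) = ⊤ := by
    apply chi_li.span_eq_top_of_card_eq_finrank'
    rw [Module.finrank_fintype_fun_eq_card]
    exact hcard
  -- every multiplication operator composed with a translation operator lies in the span
  have hdiag : ∀ (g : G) (f : A → ℂ), diagOp f ∘ₗ phiG π g ∈ Submodule.span ℂ S := by
    intro g f
    let Lg : (A → ℂ) →ₗ[ℂ] ((A → ℂ) →ₗ[ℂ] (A → ℂ)) :=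
      { toFun := fun f => diagOp f ∘ₗ phiG π g
        map_add' := fun u w => by
          ext v x
          simp [add_mul]
        map_smul' := fun c w => by
          ext v x
          simp [mul_assoc] }
    have hmem : f ∈ (⊤ : Submodule ℂ (A → ℂ)) := trivial
    rw [← chi_span] at hmem
    have hmap := Submodule.mem_map_of_mem (f := Lg) hmem
    rw [Submodule.map_span] at hmap
    have hsub : Lg '' Set.range χ ⊆ S := by
      rintro _ ⟨_, ⟨b, rfl⟩, rfl⟩
      exact ⟨(b, g), rfl⟩
    exact Submodule.span_le.mpr (hsub.trans Submodule.subset_span) hmap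
  -- matrix units lie in the span
  have hE : ∀ a a' : A, eUnit a a' ∈ Submodule.span ℂ S := by
    intro a a'
    obtain ⟨g, hg⟩ := (rho_bijective π hbij hcoc a').2 a
    have key : g⁻¹ • (a - π g) = a' := by
      have hg' : g • a' + π g = a := hg
      have : a - π g = g • a' := sub_eq_iff_eq_add.mpr hg'.symm
      rw [this, inv_smul_smul]
    have heq : eUnit a a' = diagOp (fun x => if x = a then (1 : ℂ) else 0) ∘ₗ phiG π g := by
      refine LinearMap.ext fun v => funext fun x => ?_
      by_cases h : x = a
      · subst h
        simp only [eUnit_apply, if_pos rfl, LinearMap.comp_apply, diagOp_apply, phiG,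
          LinearMap.funLeft_apply, one_mul, key]
        simp
      · simp [phiG, h]
    rw [heq]
    exact hdiag g _
  -- conclude
  rw [eq_top_iff]
  rintro T -
  have hT : T = ∑ p : A × A,
      (T (fun j => if p.2 = j then (1 : ℂ) else 0)) p.1 • eUnit p.1 p.2 := by
    refine LinearMap.ext fun v => funext fun x => ?_
    have hv := pi_eq_sum_univ v
    conv_lhs => rw [hv]
    rw [map_sum]
    simp only [map_smul, LinearMap.sum_apply, LinearMap.smul_apply, eUnit_apply,
      Pi.smul_apply, smul_eq_mul, Finset.sum_apply]
    rw [Fintype.sum_prod_type]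
    rw [Finset.sum_comm]
    congr 1
    funext a'
    rw [Finset.sum_eq_single x]
    · simp [mul_comm]
    · intro b _ hb
      simp [Ne.symm hb]
    · intro h
      exact absurd (Finset.mem_univ x) h
  rw [hT]
  exact Submodule.sum_mem _ fun p _ => Submodule.smul_mem _ _ (hE p.1 p.2)
end

section
/- Let f: A → B be an isomorphism of Hopf algebras from A^J to B^{J'}, where J, J' are twists for A, B respectively. Then J'·(f⊗f)(J)⁻¹ is a twist for B. -/
open TensorProduct

/-! ### Auxiliary definitions and lemmas -/

section Aux

variable {k : Type*} [Field k]

/-- `f ⊗ f` as an algebra hom. -/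
private noncomputable def Fmap {A B : Type*} [Ring A] [Algebra k A] [Ring B] [Algebra k B]
    (f : A ≃ₐ[k] B) : A ⊗[k] A →ₐ[k] B ⊗[k] B :=
  Algebra.TensorProduct.map f.toAlgHom f.toAlgHom

/-- The transported comultiplication `(f ⊗ f) ∘ Δ_A ∘ f⁻¹`. -/
private noncomputable def Dmap {A B : Type*} [Ring A] [HopfAlgebra k A] [Ring B] [HopfAlgebra k B]
    (f : A ≃ₐ[k] B) : B →ₗ[k] B ⊗[k] B :=
  (TensorProduct.map f.toLinearMap f.toLinearMap) ∘ₗ (Coalgebra.comul (R := k)) ∘ₗ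
    f.symm.toLinearMap

/-- `Δ ⊗ id` as an algebra hom. -/
private noncomputable def Psi1 (k B : Type*) [Field k] [Ring B] [HopfAlgebra k B] :
    B ⊗[k] B →ₐ[k] (B ⊗[k] B) ⊗[k] B :=
  Algebra.TensorProduct.map (Bialgebra.comulAlgHom k B) (AlgHom.id k B)

/-- `id ⊗ Δ` as an algebra hom. -/
private noncomputable def Psi2 (k B : Type*) [Field k] [Ring B] [HopfAlgebra k B] :
    B ⊗[k] B →ₐ[k] B ⊗[k] (B ⊗[k] B) :=
  Algebra.TensorProduct.map (AlgHom.id k B) (Bialgebra.comulAlgHom k B)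

/-- `lid ∘ (ε ⊗ id)` as an algebra hom. -/
private noncomputable def chiL (k B : Type*) [Field k] [Ring B] [HopfAlgebra k B] :
    B ⊗[k] B →ₐ[k] B :=
  (Algebra.TensorProduct.lid k B).toAlgHom.comp
    (Algebra.TensorProduct.map (Bialgebra.counitAlgHom k B) (AlgHom.id k B))

/-- `rid ∘ (id ⊗ ε)` as an algebra hom. -/
private noncomputable def chiR (k B : Type*) [Field k] [Ring B] [HopfAlgebra k B] :
    B ⊗[k] B →ₐ[k] B :=
  (Algebra.TensorProduct.rid k k B).toAlgHom.comp
    (Algebra.TensorProduct.map (AlgHom.id k B) (Bialgebra.counitAlgHom k B))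

variable {A B : Type*} [Ring A] [HopfAlgebra k A] [Ring B] [HopfAlgebra k B]

private lemma Fmap_eq (f : A ≃ₐ[k] B) (z : A ⊗[k] A) :
    TensorProduct.map f.toLinearMap f.toLinearMap z = Fmap f z := by
  induction z using TensorProduct.induction_on with
  | zero => simp
  | tmul x y => simp [Fmap]
  | add u v hu hv => simp only [map_add, hu, hv]

private lemma Fmap_tmul (f : A ≃ₐ[k] B) (x y : A) :
    Fmap f (x ⊗ₜ[k] y) = f x ⊗ₜ[k] f y := by
  simp [Fmap]

private lemma Dmap_apply (f : A ≃ₐ[k] B) (a : A) :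
    Dmap f (f a) = Fmap f (Coalgebra.comul (R := k) a) := by
  rw [Dmap]
  simp only [LinearMap.coe_comp, Function.comp_apply, AlgEquiv.toLinearMap_apply,
    AlgEquiv.symm_apply_apply]
  exact Fmap_eq f _

private lemma Psi1_eq (z : B ⊗[k] B) :
    TensorProduct.map (Coalgebra.comul (R := k)) LinearMap.id z = Psi1 k B z := by
  induction z using TensorProduct.induction_on with
  | zero => simp
  | tmul x y => simp [Psi1]
  | add u v hu hv => simp only [map_add, hu, hv]

private lemma Psi2_eq (z : B ⊗[k] B) :
    TensorProduct.map LinearMap.id (Coalgebra.comul (R := k)) z = Psi2 k B z := by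
  induction z using TensorProduct.induction_on with
  | zero => simp
  | tmul x y => simp [Psi2]
  | add u v hu hv => simp only [map_add, hu, hv]

private lemma chiL_eq (z : B ⊗[k] B) :
    TensorProduct.lid k B (TensorProduct.map (Coalgebra.counit (R := k)) LinearMap.id z) =
      chiL k B z := by
  induction z using TensorProduct.induction_on with
  | zero => simp
  | tmul x y => simp [chiL]
  | add u v hu hv => simp only [map_add, hu, hv]

private lemma chiR_eq (z : B ⊗[k] B) :
    TensorProduct.rid k B (TensorProduct.map LinearMap.id (Coalgebra.counit (R := k)) z) =
      chiR k B z := by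
  induction z using TensorProduct.induction_on with
  | zero => simp
  | tmul x y => simp [chiR]
  | add u v hu hv => simp only [map_add, hu, hv]

private lemma chiL_Fmap (f : A ≃ₐ[k] B)
    (hcounit : ∀ a : A, Coalgebra.counit (R := k) (f a) = Coalgebra.counit (R := k) a)
    (z : A ⊗[k] A) :
    chiL k B (Fmap f z) =
      f (TensorProduct.lid k A
        (TensorProduct.map (Coalgebra.counit (R := k)) LinearMap.id z)) := by
  induction z using TensorProduct.induction_on with
  | zero => simp
  | tmul x y => simp [chiL, Fmap_tmul, hcounit]
  | add u v hu hv => simp only [map_add, hu, hv]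

private lemma chiR_Fmap (f : A ≃ₐ[k] B)
    (hcounit : ∀ a : A, Coalgebra.counit (R := k) (f a) = Coalgebra.counit (R := k) a)
    (z : A ⊗[k] A) :
    chiR k B (Fmap f z) =
      f (TensorProduct.rid k A
        (TensorProduct.map LinearMap.id (Coalgebra.counit (R := k)) z)) := by
  induction z using TensorProduct.induction_on with
  | zero => simp
  | tmul x y => simp [chiR, Fmap_tmul, hcounit]
  | add u v hu hv => simp only [map_add, hu, hv]

private lemma assoc_natural (f : A ≃ₐ[k] B) (z : A ⊗[k] (A ⊗[k] A)) :
    (Algebra.TensorProduct.map (Fmap f) f.toAlgHom)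
        ((Algebra.TensorProduct.assoc k k k A A A).symm z) =
      (Algebra.TensorProduct.assoc k k k B B B).symm
        ((Algebra.TensorProduct.map f.toAlgHom (Fmap f)) z) := by
  induction z using TensorProduct.induction_on with
  | zero => simp
  | tmul x w =>
    induction w using TensorProduct.induction_on with
    | zero => simp
    | tmul y u =>
      simp [Fmap, Algebra.TensorProduct.assoc_symm_tmul]
    | add w₁ w₂ h₁ h₂ => simp only [TensorProduct.tmul_add, map_add, h₁, h₂]
  | add z₁ z₂ h₁ h₂ => simp only [map_add, h₁, h₂]

private lemma F3_comul (f : A ≃ₐ[k] B) (z : A ⊗[k] A) :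
    (Algebra.TensorProduct.map (Fmap f) f.toAlgHom)
        (TensorProduct.map (Coalgebra.comul (R := k)) LinearMap.id z) =
      TensorProduct.map (Dmap f) LinearMap.id (Fmap f z) := by
  induction z using TensorProduct.induction_on with
  | zero => simp
  | tmul x y =>
    simp only [TensorProduct.map_tmul, LinearMap.id_coe, id_eq,
      Algebra.TensorProduct.map_tmul, Fmap_tmul, AlgEquiv.toAlgHom_eq_coe, AlgHom.coe_coe,
      Dmap_apply, AlgEquiv.coe_toAlgHom]
  | add u v hu hv => simp only [map_add, hu, hv]

private lemma F3'_comul (f : A ≃ₐ[k] B) (z : A ⊗[k] A) :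
    (Algebra.TensorProduct.map f.toAlgHom (Fmap f))
        (TensorProduct.map LinearMap.id (Coalgebra.comul (R := k)) z) =
      TensorProduct.map LinearMap.id (Dmap f) (Fmap f z) := by
  induction z using TensorProduct.induction_on with
  | zero => simp
  | tmul x y =>
    simp only [TensorProduct.map_tmul, LinearMap.id_coe, id_eq,
      Algebra.TensorProduct.map_tmul, Fmap_tmul, AlgEquiv.toAlgHom_eq_coe, AlgHom.coe_coe,
      Dmap_apply, AlgEquiv.coe_toAlgHom]
  | add u v hu hv => simp only [map_add, hu, hv]

/-- If `g = c · h · c'` pointwise, the same holds for `g ⊗ id` with `c ⊗ 1`. -/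
private lemma map_conj_left {C : Type*} [Ring C] [Algebra k C]
    (g h : B →ₗ[k] C) (c c' : C) (hgh : ∀ b, g b = c * h b * c')
    (z : B ⊗[k] B) :
    TensorProduct.map g LinearMap.id z =
      (c ⊗ₜ[k] (1 : B)) * (TensorProduct.map h LinearMap.id z) * (c' ⊗ₜ[k] (1 : B)) := by
  induction z using TensorProduct.induction_on with
  | zero => simp
  | tmul x y => simp [hgh, Algebra.TensorProduct.tmul_mul_tmul]
  | add u v hu hv => rw [map_add, map_add, hu, hv]; rw [mul_add, add_mul]

private lemma map_conj_right {C : Type*} [Ring C] [Algebra k C]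
    (g h : B →ₗ[k] C) (c c' : C) (hgh : ∀ b, g b = c * h b * c')
    (z : B ⊗[k] B) :
    TensorProduct.map LinearMap.id g z =
      ((1 : B) ⊗ₜ[k] c) * (TensorProduct.map LinearMap.id h z) * ((1 : B) ⊗ₜ[k] c') := by
  induction z using TensorProduct.induction_on with
  | zero => simp
  | tmul x y => simp [hgh, Algebra.TensorProduct.tmul_mul_tmul]
  | add u v hu hv => rw [map_add, map_add, hu, hv]; rw [mul_add, add_mul]

private lemma sandwich_mul {M : Type*} [Monoid M] {t t' x y : M}
    (htt' : t * t' = 1) (ht't : t' * t = 1) (hxy : x * y = 1) :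
    (t' * x * t) * (t' * y * t) = 1 := by
  calc (t' * x * t) * (t' * y * t)
      = t' * (x * ((t * t') * (y * t))) := by simp only [mul_assoc]
    _ = t' * (x * (y * t)) := by rw [htt', one_mul]
    _ = (t' * (x * y)) * t := by simp only [mul_assoc]
    _ = t' * t := by rw [hxy, mul_one]
    _ = 1 := ht't

private lemma sandwich_sandwich {M : Type*} [Monoid M] {t t' x : M}
    (htt' : t * t' = 1) (_ht't : t' * t = 1) :
    t * (t' * x * t) * t' = x := by
  calc t * (t' * x * t) * t'
      = (t * t') * x * (t * t') := by simp only [mul_assoc]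
    _ = x := by rw [htt', one_mul, mul_one]

end Aux

set_option maxHeartbeats 2000000 in
/-- If `f : A^J → B^{J'}` is an isomorphism of Hopf algebras, where `J`, `J'` are twists for
`A`, `B`, then `J' · (f⊗f)(J)⁻¹` is a twist for `B`. -/
theorem twist_of_iso (k : Type*) [Field k] (A : Type*) [Ring A] [HopfAlgebra k A]
    (B : Type*) [Ring B] [HopfAlgebra k B]
    (J : A ⊗[k] A) (hJ : IsHopfTwist k A J) (J' : B ⊗[k] B) (hJ' : IsHopfTwist k B J')
    (f : A ≃ₐ[k] B)
    (hcoalg : ∀ a : A,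
      TensorProduct.map f.toLinearMap f.toLinearMap (twistedComul k A J a) =
        twistedComul k B J' (f a))
    (hcounit : ∀ a : A, Coalgebra.counit (R := k) (f a) = Coalgebra.counit (R := k) a) :
    IsHopfTwist k B
      (J' * Ring.inverse (TensorProduct.map f.toLinearMap f.toLinearMap J)) := by
  classical
  unfold IsHopfTwist at hJ hJ' ⊢
  obtain ⟨hJu, hJc, hJl, hJr⟩ := hJ
  obtain ⟨hJ'u, hJ'c, hJ'l, hJ'r⟩ := hJ'
  rw [Fmap_eq f J]
  have hKu : IsUnit (Fmap f J) := hJu.map (Fmap f)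
  set K : B ⊗[k] B := Fmap f J with hK
  set iK := Ring.inverse K with hiK
  set iJ' := Ring.inverse J' with hiJ'
  have hKiK : K * iK = 1 := Ring.mul_inverse_cancel _ hKu
  have hiKK : iK * K = 1 := Ring.inverse_mul_cancel _ hKu
  have hJ'iJ' : J' * iJ' = 1 := Ring.mul_inverse_cancel _ hJ'u
  have hiJ'J' : iJ' * J' = 1 := Ring.inverse_mul_cancel _ hJ'u
  set T : B ⊗[k] B := J' * iK with hT
  set T' : B ⊗[k] B := K * iJ' with hT'
  have hTT' : T * T' = 1 := by
    rw [hT, hT', mul_assoc, ← mul_assoc iK, hiKK, one_mul, hJ'iJ']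
  have hT'T : T' * T = 1 := by
    rw [hT, hT', mul_assoc, ← mul_assoc iJ', hiJ'J', one_mul, hKiK]
  -- the conjugation property of the transported comultiplication
  have hconj : ∀ b : B, Coalgebra.comul (R := k) b = T * Dmap f b * T' := by
    intro b
    have h1 := hcoalg (f.symm b)
    rw [twistedComul, twistedComul] at h1
    simp only [LinearMap.coe_comp, Function.comp_apply, LinearMap.mulRight_apply,
      LinearMap.mulLeft_apply, AlgEquiv.apply_symm_apply] at h1
    rw [Fmap_eq, map_mul, map_mul] at h1
    have hFiJ : Fmap f (Ring.inverse J) = iK := by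
      refine left_inv_eq_right_inv (a := K) ?_ hKiK
      rw [hK, ← map_mul, Ring.inverse_mul_cancel _ hJu, map_one]
    rw [hFiJ] at h1
    have hDb : Fmap f (Coalgebra.comul (R := k) (f.symm b)) = Dmap f b := by
      rw [← Dmap_apply f (f.symm b), AlgEquiv.apply_symm_apply]
    rw [hDb, ← hK, ← hiJ'] at h1
    have h2 : J' * (iK * Dmap f b * K) * iJ' =
        J' * (iJ' * Coalgebra.comul (R := k) b * J') * iJ' := by rw [h1]
    calc Coalgebra.comul (R := k) b
        = J' * (iJ' * Coalgebra.comul (R := k) b * J') * iJ' := by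
          simp only [← mul_assoc]; rw [hJ'iJ', one_mul, mul_assoc, hJ'iJ', mul_one]
      _ = J' * (iK * Dmap f b * K) * iJ' := h2.symm
      _ = T * Dmap f b * T' := by rw [hT, hT']; noncomm_ring
  -- transported cocycle identity for K
  have hcocK : TensorProduct.map (Dmap f) LinearMap.id K * (K ⊗ₜ[k] (1 : B)) =
      (Algebra.TensorProduct.assoc k k k B B B).symm
        (TensorProduct.map LinearMap.id (Dmap f) K * ((1 : B) ⊗ₜ[k] K)) := by
    have h0 := congrArg (Algebra.TensorProduct.map (Fmap f) f.toAlgHom) hJc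
    rw [map_mul, F3_comul, assoc_natural, map_mul, F3'_comul] at h0
    have e1 : (Algebra.TensorProduct.map (Fmap f) f.toAlgHom) (J ⊗ₜ[k] (1 : A)) =
        K ⊗ₜ[k] (1 : B) := by
      rw [hK]; simp
    have e2 : (Algebra.TensorProduct.map f.toAlgHom (Fmap f)) ((1 : A) ⊗ₜ[k] J) =
        (1 : B) ⊗ₜ[k] K := by
      rw [hK]; simp
    rw [e1, e2, ← hK] at h0
    exact h0
  -- sandwiching facts
  set P₁ := TensorProduct.map (Dmap f) LinearMap.id K with hP₁
  set P₂ := TensorProduct.map LinearMap.id (Dmap f) K with hP₂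
  have ht1 : (T ⊗ₜ[k] (1 : B)) * (T' ⊗ₜ[k] (1 : B)) = 1 := by
    rw [Algebra.TensorProduct.tmul_mul_tmul, hTT', mul_one]
    exact Algebra.TensorProduct.one_def.symm
  have ht2 : (T' ⊗ₜ[k] (1 : B)) * (T ⊗ₜ[k] (1 : B)) = 1 := by
    rw [Algebra.TensorProduct.tmul_mul_tmul, hT'T, mul_one]
    exact Algebra.TensorProduct.one_def.symm
  have hs1 : ((1 : B) ⊗ₜ[k] T) * ((1 : B) ⊗ₜ[k] T') = 1 := by
    rw [Algebra.TensorProduct.tmul_mul_tmul, hTT', mul_one]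
    exact Algebra.TensorProduct.one_def.symm
  have hs2 : ((1 : B) ⊗ₜ[k] T') * ((1 : B) ⊗ₜ[k] T) = 1 := by
    rw [Algebra.TensorProduct.tmul_mul_tmul, hT'T, mul_one]
    exact Algebra.TensorProduct.one_def.symm
  have hΨ₁K : Psi1 k B K = (T ⊗ₜ[k] (1 : B)) * P₁ * (T' ⊗ₜ[k] (1 : B)) := by
    rw [hP₁, ← Psi1_eq]
    exact map_conj_left _ _ _ _ hconj K
  have hΨ₂K : Psi2 k B K = ((1 : B) ⊗ₜ[k] T) * P₂ * ((1 : B) ⊗ₜ[k] T') := by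
    rw [hP₂, ← Psi2_eq]
    exact map_conj_right _ _ _ _ hconj K
  have hmid : Psi1 k B K * Psi1 k B iK = 1 := by rw [← map_mul, hKiK, map_one]
  have hmid' : Psi1 k B iK * Psi1 k B K = 1 := by rw [← map_mul, hiKK, map_one]
  have hmid₂ : Psi2 k B K * Psi2 k B iK = 1 := by rw [← map_mul, hKiK, map_one]
  have hmid₂' : Psi2 k B iK * Psi2 k B K = 1 := by rw [← map_mul, hiKK, map_one]
  set iP₁ := (T' ⊗ₜ[k] (1 : B)) * Psi1 k B iK * (T ⊗ₜ[k] (1 : B)) with hiP₁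
  set iP₂ := ((1 : B) ⊗ₜ[k] T') * Psi2 k B iK * ((1 : B) ⊗ₜ[k] T) with hiP₂
  have hP₁' : (T' ⊗ₜ[k] (1 : B)) * Psi1 k B K * (T ⊗ₜ[k] (1 : B)) = P₁ := by
    rw [hΨ₁K]; exact sandwich_sandwich ht2 ht1
  have hP₂' : ((1 : B) ⊗ₜ[k] T') * Psi2 k B K * ((1 : B) ⊗ₜ[k] T) = P₂ := by
    rw [hΨ₂K]; exact sandwich_sandwich hs2 hs1
  have hP₁iP₁ : P₁ * iP₁ = 1 := by
    rw [← hP₁', hiP₁]; exact sandwich_mul ht1 ht2 hmid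
  have hiP₁P₁ : iP₁ * P₁ = 1 := by
    rw [← hP₁', hiP₁]; exact sandwich_mul ht1 ht2 hmid'
  have hP₂iP₂ : P₂ * iP₂ = 1 := by
    rw [← hP₂', hiP₂]; exact sandwich_mul hs1 hs2 hmid₂
  have hiP₂P₂ : iP₂ * P₂ = 1 := by
    rw [← hP₂', hiP₂]; exact sandwich_mul hs1 hs2 hmid₂'
  -- the key inverse computation
  have hL : ((iK ⊗ₜ[k] (1 : B)) * iP₁) * (P₁ * (K ⊗ₜ[k] (1 : B))) = 1 := by
    calc ((iK ⊗ₜ[k] (1 : B)) * iP₁) * (P₁ * (K ⊗ₜ[k] (1 : B)))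
        = (iK ⊗ₜ[k] (1 : B)) * ((iP₁ * P₁) * (K ⊗ₜ[k] (1 : B))) := by simp only [mul_assoc]
      _ = (iK ⊗ₜ[k] (1 : B)) * (K ⊗ₜ[k] (1 : B)) := by rw [hiP₁P₁, one_mul]
      _ = 1 := by
          rw [Algebra.TensorProduct.tmul_mul_tmul, hiKK, one_mul]
          exact Algebra.TensorProduct.one_def.symm
  have hR : (P₁ * (K ⊗ₜ[k] (1 : B))) *
      (Algebra.TensorProduct.assoc k k k B B B).symm
        (((1 : B) ⊗ₜ[k] iK) * iP₂) = 1 := by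
    rw [hcocK, ← map_mul]
    have hinner : (P₂ * ((1 : B) ⊗ₜ[k] K)) * (((1 : B) ⊗ₜ[k] iK) * iP₂) = 1 := by
      calc (P₂ * ((1 : B) ⊗ₜ[k] K)) * (((1 : B) ⊗ₜ[k] iK) * iP₂)
          = P₂ * ((((1 : B) ⊗ₜ[k] K) * ((1 : B) ⊗ₜ[k] iK)) * iP₂) := by simp only [mul_assoc]
        _ = P₂ * iP₂ := by
            rw [Algebra.TensorProduct.tmul_mul_tmul, hKiK, mul_one,
              ← Algebra.TensorProduct.one_def, one_mul]
        _ = 1 := hP₂iP₂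
    rw [hinner, map_one]
  have hCmain : (iK ⊗ₜ[k] (1 : B)) * iP₁ =
      (Algebra.TensorProduct.assoc k k k B B B).symm (((1 : B) ⊗ₜ[k] iK) * iP₂) :=
    left_inv_eq_right_inv hL hR
  -- splitting T
  have hTsplit : T ⊗ₜ[k] (1 : B) = (J' ⊗ₜ[k] (1 : B)) * (iK ⊗ₜ[k] (1 : B)) := by
    rw [Algebra.TensorProduct.tmul_mul_tmul, mul_one, hT]
  have hTsplit' : (1 : B) ⊗ₜ[k] T = ((1 : B) ⊗ₜ[k] J') * ((1 : B) ⊗ₜ[k] iK) := by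
    rw [Algebra.TensorProduct.tmul_mul_tmul, mul_one, hT]
  have hstepA : Psi1 k B iK * (T ⊗ₜ[k] (1 : B)) = (T ⊗ₜ[k] (1 : B)) * iP₁ := by
    rw [hiP₁]
    simp only [← mul_assoc]
    rw [ht1, one_mul]
  have hstepA' : Psi2 k B iK * ((1 : B) ⊗ₜ[k] T) = ((1 : B) ⊗ₜ[k] T) * iP₂ := by
    rw [hiP₂]
    simp only [← mul_assoc]
    rw [hs1, one_mul]
  have hQ : Psi1 k B J' * (J' ⊗ₜ[k] (1 : B)) =
      (Algebra.TensorProduct.assoc k k k B B B).symm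
        (Psi2 k B J' * ((1 : B) ⊗ₜ[k] J')) := by
    rw [← Psi1_eq, ← Psi2_eq]; exact hJ'c
  refine ⟨hJ'u.mul hKu.ringInverse, ?_, ?_, ?_⟩
  · -- the cocycle identity
    rw [Psi1_eq, Psi2_eq]
    calc Psi1 k B T * (T ⊗ₜ[k] (1 : B))
        = Psi1 k B J' * (Psi1 k B iK * (T ⊗ₜ[k] (1 : B))) := by
          rw [hT, map_mul, mul_assoc]
      _ = Psi1 k B J' * ((T ⊗ₜ[k] (1 : B)) * iP₁) := by rw [hstepA]
      _ = (Psi1 k B J' * (J' ⊗ₜ[k] (1 : B))) * ((iK ⊗ₜ[k] (1 : B)) * iP₁) := by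
          rw [hTsplit]; simp only [mul_assoc]
      _ = (Algebra.TensorProduct.assoc k k k B B B).symm
            (Psi2 k B J' * ((1 : B) ⊗ₜ[k] J')) *
          (Algebra.TensorProduct.assoc k k k B B B).symm
            (((1 : B) ⊗ₜ[k] iK) * iP₂) := by rw [hQ, hCmain]
      _ = (Algebra.TensorProduct.assoc k k k B B B).symm
            ((Psi2 k B J' * ((1 : B) ⊗ₜ[k] J')) * (((1 : B) ⊗ₜ[k] iK) * iP₂)) := by
          rw [← map_mul]
      _ = (Algebra.TensorProduct.assoc k k k B B B).symm
            (Psi2 k B T * ((1 : B) ⊗ₜ[k] T)) := by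
          congr 1
          calc (Psi2 k B J' * ((1 : B) ⊗ₜ[k] J')) * (((1 : B) ⊗ₜ[k] iK) * iP₂)
              = Psi2 k B J' * ((((1 : B) ⊗ₜ[k] J') * ((1 : B) ⊗ₜ[k] iK)) * iP₂) := by
                simp only [mul_assoc]
            _ = Psi2 k B J' * (((1 : B) ⊗ₜ[k] T) * iP₂) := by rw [← hTsplit']
            _ = Psi2 k B J' * (Psi2 k B iK * ((1 : B) ⊗ₜ[k] T)) := by rw [hstepA']
            _ = Psi2 k B T * ((1 : B) ⊗ₜ[k] T) := by rw [hT, map_mul, mul_assoc]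
  · -- left counit identity
    rw [chiL_eq, hT, map_mul]
    have hχJ' : chiL k B J' = 1 := by rw [← chiL_eq]; exact hJ'l
    have hχK : chiL k B K = 1 := by
      rw [hK, chiL_Fmap f hcounit J, hJl, map_one]
    have hχiK : chiL k B iK = 1 := by
      have h3 := congrArg (chiL k B) hiKK
      rw [map_mul, hχK, mul_one, map_one] at h3
      exact h3
    rw [hχJ', hχiK, mul_one]
  · -- right counit identity
    rw [chiR_eq, hT, map_mul]
    have hχJ' : chiR k B J' = 1 := by rw [← chiR_eq]; exact hJ'r
    have hχK : chiR k B K = 1 := by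
      rw [hK, chiR_Fmap f hcounit J, hJr, map_one]
    have hχiK : chiR k B iK = 1 := by
      have h3 := congrArg (chiR k B) hiKK
      rw [map_mul, hχK, mul_one, map_one] at h3
      exact h3
    rw [hχJ', hχiK, mul_one]
end
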